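/- For every color c ∈ [k] and every ℓ, define α_{c,ℓ} = E_{X∼μ_ℓ}[|μ^↑_{X,ℓ}(c) − 1/k|] (the expectation over the leaf-marginal of μ_ℓ) and β_{c,ℓ} = |μ^{↓↑}_{c,ℓ}(c) − 1/k|. Then β_{c,ℓ}/(k−1) ≤ α_{c,ℓ} ≤ √(β_{c,ℓ}). -/

import Mathlib

/-- Vertices of the complete rooted tree of depth `ℓ` and branching factor `Δ`:
a vertex is the path leading to it from the root, i.e. a pair of a depth `i ≤ ℓ`
and a function `Fin i → Fin Δ`. -/
abbrev TVertex (Δ ℓ : ℕ) : Type := Σ i : Fin (ℓ + 1), Fin i.val → Fin Δ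

/-- The root of the tree. -/
def troot (Δ ℓ : ℕ) : TVertex Δ ℓ := ⟨⟨0, Nat.succ_pos ℓ⟩, fun i => i.elim0⟩

/-- The `j`-th child of a vertex `v` of depth `< ℓ`. -/
def tchild {Δ ℓ : ℕ} (v : TVertex Δ ℓ) (h : v.1.val < ℓ) (j : Fin Δ) : TVertex Δ ℓ :=
  ⟨⟨v.1.val + 1, Nat.succ_lt_succ h⟩, Fin.snoc v.2 j⟩

/-- A proper `k`-coloring of the tree: adjacent (parent/child) vertices get distinct colors. -/
def ProperColoring (Δ ℓ k : ℕ) (σ : TVertex Δ ℓ → Fin k) : Prop :=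
  ∀ (v : TVertex Δ ℓ) (h : v.1.val < ℓ) (j : Fin Δ), σ v ≠ σ (tchild v h j)

/-- The leaf determined by a root-to-leaf path. -/
def leafVertex {Δ ℓ : ℕ} (f : Fin ℓ → Fin Δ) : TVertex Δ ℓ := ⟨⟨ℓ, Nat.lt_succ_self ℓ⟩, f⟩

/-- Restriction of a coloring of the tree to the leaves. -/
def leafColoring {Δ ℓ k : ℕ} (σ : TVertex Δ ℓ → Fin k) : (Fin ℓ → Fin Δ) → Fin k :=
  fun f => σ (leafVertex f)

/-- A total leaf coloring, viewed as a partial one (no `⋆`s). -/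
def toPartial {Δ ℓ k : ℕ} (X : (Fin ℓ → Fin Δ) → Fin k) : (Fin ℓ → Fin Δ) → Option (Fin k) :=
  fun f => some (X f)

/-- Probability of the event `E` under the uniform measure `μ_ℓ` on proper colorings. -/
noncomputable def treeProb (Δ ℓ k : ℕ) (E : (TVertex Δ ℓ → Fin k) → Prop) : ℝ :=
  (Nat.card {σ : TVertex Δ ℓ → Fin k // ProperColoring Δ ℓ k σ ∧ E σ} : ℝ) /
    (Nat.card {σ : TVertex Δ ℓ → Fin k // ProperColoring Δ ℓ k σ} : ℝ)

/-- Expectation of `f` under the uniform measure `μ_ℓ` on proper colorings. -/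
noncomputable def treeExp (Δ ℓ k : ℕ) (f : (TVertex Δ ℓ → Fin k) → ℝ) : ℝ :=
  (∑ σ : TVertex Δ ℓ → Fin k, Set.indicator {σ | ProperColoring Δ ℓ k σ} f σ) /
    (Nat.card {σ : TVertex Δ ℓ → Fin k // ProperColoring Δ ℓ k σ} : ℝ)

/-- `σ` agrees with the partial leaf coloring `X` on every leaf colored by `X`. -/
def AgreesOn {Δ ℓ k : ℕ} (σ : TVertex Δ ℓ → Fin k) (X : (Fin ℓ → Fin Δ) → Option (Fin k)) : Prop :=
  ∀ (f : Fin ℓ → Fin Δ) (c : Fin k), X f = some c → leafColoring σ f = c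

/-- `X` is an allowed partial coloring of the leaves. -/
def AllowedP (Δ ℓ k : ℕ) (X : (Fin ℓ → Fin Δ) → Option (Fin k)) : Prop :=
  ∃ σ, ProperColoring Δ ℓ k σ ∧ AgreesOn σ X

/-- `μ_ℓ(σ(root) = c | σ` agrees with `X` at the leaves`)`. -/
noncomputable def condProbRootP (Δ ℓ k : ℕ) (X : (Fin ℓ → Fin Δ) → Option (Fin k))
    (c : Fin k) : ℝ :=
  (Nat.card {σ : TVertex Δ ℓ → Fin k //
      ProperColoring Δ ℓ k σ ∧ AgreesOn σ X ∧ σ (troot Δ ℓ) = c} : ℝ) /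
    (Nat.card {σ : TVertex Δ ℓ → Fin k // ProperColoring Δ ℓ k σ ∧ AgreesOn σ X} : ℝ)

/-- Restriction of a vector indexed by the leaves of `T_{ℓ+1}` to the leaves below
the `j`-th child of the root. -/
def childRestrict {Δ ℓ : ℕ} {β : Sort*} (X : (Fin (ℓ + 1) → Fin Δ) → β) (j : Fin Δ) :
    (Fin ℓ → Fin Δ) → β := fun g => X (Fin.cons j g)

/-- The recursively defined quantity `P_h(X, c)`. -/
noncomputable def Pfun (Δ k : ℕ) : (h : ℕ) → ((Fin h → Fin Δ) → Option (Fin k)) → Fin k → ℝ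
  | 0, X, c =>
    match X (fun i => i.elim0) with
    | none => 1 / (k : ℝ)
    | some d => if d = c then 1 else 0
  | h + 1, X, c =>
    (∏ j : Fin Δ, (1 - Pfun Δ k h (childRestrict X j) c)) /
      ∑ d : Fin k, ∏ j : Fin Δ, (1 - Pfun Δ k h (childRestrict X j) d)

/-- Unbiasing partial colorings of the leaves of `T_ℓ` (meaningful for `ℓ ≥ 1`). -/
def Unbiasing (Δ k : ℕ) (ε : ℝ) : (ℓ : ℕ) → ((Fin ℓ → Fin Δ) → Option (Fin k)) → Prop
  | 0, _ => True
  | 1, X => (Δ : ℝ) ^ (ε / 2) ≤ (Nat.card {c : Fin k // ∀ f, X f ≠ some c} : ℝ)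
  | ℓ + 2, X =>
      (Nat.card {j : Fin Δ // ¬ Unbiasing Δ k ε (ℓ + 1) (childRestrict X j)} : ℝ) ≤
        (Δ : ℝ) ^ ((1 : ℝ) - ε)

/-- Auxiliary notion: every subtree vertex of height `≥ t` has an unbiasing restriction. -/
def HighlyUnbiasingAux (Δ k : ℕ) (ε t : ℝ) :
    (h : ℕ) → ((Fin h → Fin Δ) → Option (Fin k)) → Prop
  | 0, _ => True
  | h + 1, X => ((t ≤ (h : ℝ) + 1) → Unbiasing Δ k ε (h + 1) X) ∧
      ∀ j : Fin Δ, HighlyUnbiasingAux Δ k ε t h (childRestrict X j)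

/-- Highly unbiasing partial colorings of the leaves of `T_ℓ`: the restriction to the
leaves below `v` is unbiasing for every vertex `v` at distance `≥ εℓ` from the leaves. -/
def HighlyUnbiasing (Δ k : ℕ) (ε : ℝ) (ℓ : ℕ) (X : (Fin ℓ → Fin Δ) → Option (Fin k)) : Prop :=
  HighlyUnbiasingAux Δ k ε (ε * ℓ) ℓ X

/-- `μ↓_{c,ℓ}`: the distribution of the leaf coloring conditioned on the root color `c`. -/
noncomputable def downDist (Δ ℓ k : ℕ) (c : Fin k) (X : (Fin ℓ → Fin Δ) → Fin k) : ℝ :=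
  (Nat.card {σ : TVertex Δ ℓ → Fin k //
      ProperColoring Δ ℓ k σ ∧ σ (troot Δ ℓ) = c ∧ leafColoring σ = X} : ℝ) /
    (Nat.card {σ : TVertex Δ ℓ → Fin k // ProperColoring Δ ℓ k σ ∧ σ (troot Δ ℓ) = c} : ℝ)

/-- `μ↑_{X,ℓ}`: the distribution of the root color given the (total) leaf coloring `X`. -/
noncomputable def upDist (Δ ℓ k : ℕ) (X : (Fin ℓ → Fin Δ) → Fin k) (c : Fin k) : ℝ :=
  condProbRootP Δ ℓ k (toPartial X) c

/-- `μ↓↑_{c,ℓ}`: sample leaves from `μ↓_{c,ℓ}`, then a root color from `μ↑`. -/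
noncomputable def downUp (Δ ℓ k : ℕ) (c c' : Fin k) : ℝ :=
  ∑ X : (Fin ℓ → Fin Δ) → Fin k, downDist Δ ℓ k c X * upDist Δ ℓ k X c'

/-- Hamming distance between two leaf colorings. -/
noncomputable def leafHamming {Δ ℓ k : ℕ} (X Y : (Fin ℓ → Fin Δ) → Fin k) : ℕ :=
  Nat.card {f : Fin ℓ → Fin Δ // X f ≠ Y f}

/-- Total variation distance between two distributions on `Fin k`. -/
noncomputable def tvDist {k : ℕ} (p q : Fin k → ℝ) : ℝ :=
  (∑ c : Fin k, |p c - q c|) / 2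

/-- `ν` is a coupling of the distributions `p` and `q`. -/
def IsCoupling {α β : Type*} [Fintype α] [Fintype β] (ν : α × β → ℝ)
    (p : α → ℝ) (q : β → ℝ) : Prop :=
  (∀ z, 0 ≤ ν z) ∧ (∀ x, ∑ y : β, ν (x, y) = p x) ∧ (∀ y, ∑ x : α, ν (x, y) = q y)


open scoped Classical in
private noncomputable def ind (p : Prop) : ℝ := if p then 1 else 0

private lemma ind_congr {p q : Prop} (h : p ↔ q) : ind p = ind q :=
  congrArg ind (propext h)

private lemma ind_nonneg (p : Prop) : 0 ≤ ind p := by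
  unfold ind; split_ifs <;> norm_num

private lemma card_subtype_sum_real {α : Type*} [Fintype α] (p : α → Prop) :
    (Nat.card {a // p a} : ℝ) = ∑ a : α, ind (p a) := by
  classical
  unfold ind
  rw [Finset.sum_boole, Nat.card_eq_fintype_card, Fintype.card_subtype]

private lemma sum_fiber_mul {α β : Type*} [Fintype α] [Fintype β]
    (g : α → β) (p : α → Prop) (F : β → ℝ) :
    ∑ X : β, (∑ a : α, ind (p a ∧ g a = X)) * F X
      = ∑ a : α, ind (p a) * F (g a) := by
  classical
  unfold ind
  simp_rw [Finset.sum_mul]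
  rw [Finset.sum_comm]
  refine Finset.sum_congr rfl fun a _ => ?_
  by_cases hp : p a <;> simp [hp]


private lemma core (k : ℕ) (hk : 2 ≤ k) {ι : Type*} [Fintype ι]
    (w p : ι → ℝ) (hw : ∀ i, 0 ≤ w i) (hw1 : ∑ i, w i = 1)
    (hp0 : ∀ i, 0 ≤ p i) (hp1 : ∀ i, p i ≤ 1)
    (hwp : ∑ i, w i * p i = 1 / k) :
    |(k:ℝ) * (∑ i, w i * p i ^ 2) - 1/k| / ((k:ℝ)-1) ≤ ∑ i, w i * |p i - 1/k| ∧
      ∑ i, w i * |p i - 1/k| ≤ Real.sqrt |(k:ℝ) * (∑ i, w i * p i ^ 2) - 1/k| := by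
  have hk0 : (0:ℝ) < k := by positivity
  have hk1 : (1:ℝ) < k := by exact_mod_cast hk
  have hk2 : (2:ℝ) ≤ k := by exact_mod_cast hk
  have h2k : 2/(k:ℝ) ≤ 1 := by rw [div_le_one hk0]; exact hk2
  set S2 : ℝ := ∑ i, w i * (p i - 1/k)^2 with hS2
  set S1 : ℝ := ∑ i, w i * |p i - 1/k| with hS1
  have hS2nn : 0 ≤ S2 :=
    Finset.sum_nonneg fun i _ => mul_nonneg (hw i) (sq_nonneg _)
  have hS1nn : 0 ≤ S1 :=
    Finset.sum_nonneg fun i _ => mul_nonneg (hw i) (abs_nonneg _)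
  have key : (k:ℝ) * (∑ i, w i * p i ^ 2) - 1/k = k * S2 := by
    have e1 : S2 = ∑ i, (w i * p i ^ 2 - (2/(k:ℝ)) * (w i * p i) + (1/(k:ℝ)^2) * w i) :=
      Finset.sum_congr rfl fun i _ => by ring
    rw [e1, Finset.sum_add_distrib, Finset.sum_sub_distrib, ← Finset.mul_sum,
      ← Finset.mul_sum, hwp, hw1]
    field_simp
    ring
  have habs : |(k:ℝ) * (∑ i, w i * p i ^ 2) - 1/k| = k * S2 := by
    rw [key, abs_of_nonneg (by positivity)]
  rw [habs]
  have hqle : ∀ i, |p i - 1/k| ≤ 1 - 1/k := by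
    intro i
    have hhalf : (1:ℝ)/k + 1/k ≤ 1 := by rw [← add_div]; norm_num; exact h2k
    refine abs_le.mpr ⟨by linarith [hp0 i], by linarith [hp1 i]⟩
  have hqle' : ∀ i, (k:ℝ) * |p i - 1/k| ≤ k - 1 := by
    intro i
    have h := hqle i
    have : (k:ℝ) * |p i - 1/k| ≤ k * (1 - 1/k) :=
      mul_le_mul_of_nonneg_left h (le_of_lt hk0)
    calc (k:ℝ) * |p i - 1/k| ≤ k * (1 - 1/k) := this
      _ = k - 1 := by field_simp
  constructor
  · rw [div_le_iff₀ (by linarith)]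
    have hterm : ∀ i ∈ Finset.univ, (k:ℝ) * (w i * (p i - 1/k)^2)
        ≤ w i * |p i - 1/k| * ((k:ℝ) - 1) := by
      intro i _
      have h1 := hqle' i
      have h2 : w i * |p i - 1/k| * ((k:ℝ) * |p i - 1/k|) ≤ w i * |p i - 1/k| * (k - 1) :=
        mul_le_mul_of_nonneg_left h1 (mul_nonneg (hw i) (abs_nonneg _))
      have h3 : (k:ℝ) * (w i * (p i - 1/k)^2) = w i * |p i - 1/k| * ((k:ℝ) * |p i - 1/k|) := by
        rw [← sq_abs (p i - 1/k)]; ring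
      linarith
    calc (k:ℝ) * S2 = ∑ i, (k:ℝ) * (w i * (p i - 1/k)^2) := by rw [hS2, Finset.mul_sum]
      _ ≤ ∑ i, w i * |p i - 1/k| * ((k:ℝ) - 1) := Finset.sum_le_sum hterm
      _ = S1 * ((k:ℝ) - 1) := by rw [hS1, Finset.sum_mul]
  · rw [show S1 = Real.sqrt (S1^2) from (Real.sqrt_sq hS1nn).symm]
    refine Real.sqrt_le_sqrt ?_
    have cs := Finset.sum_mul_sq_le_sq_mul_sq Finset.univ
      (fun i => Real.sqrt (w i)) (fun i => Real.sqrt (w i) * |p i - 1/k|)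
    have e2 : ∀ i, Real.sqrt (w i) * (Real.sqrt (w i) * |p i - 1/k|) = w i * |p i - 1/k| := by
      intro i; rw [← mul_assoc, Real.mul_self_sqrt (hw i)]
    have e4 : ∀ i, (Real.sqrt (w i) * |p i - 1/k|)^2 = w i * (p i - 1/k)^2 := by
      intro i; rw [mul_pow, Real.sq_sqrt (hw i), sq_abs]
    simp only [e2, e4, Real.sq_sqrt (hw _)] at cs
    rw [hw1, one_mul] at cs
    nlinarith


private lemma exists_proper (Δ ℓ k : ℕ) (hk : 2 ≤ k) :
    ∃ σ : TVertex Δ ℓ → Fin k, ProperColoring Δ ℓ k σ := by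
  refine ⟨fun v => if Even v.1.val then ⟨0, by omega⟩ else ⟨1, by omega⟩, ?_⟩
  intro v h j
  have hc : (tchild v h j).1.val = v.1.val + 1 := rfl
  by_cases he : Even v.1.val <;>
    simp [hc, he, Nat.even_add_one, Fin.ext_iff]

private lemma agreesOn_toPartial {Δ ℓ k : ℕ} (σ : TVertex Δ ℓ → Fin k)
    (X : (Fin ℓ → Fin Δ) → Fin k) :
    AgreesOn σ (toPartial X) ↔ leafColoring σ = X := by
  constructor
  · intro h; funext f; exact h f (X f) rfl
  · rintro rfl f c hc
    exact Option.some_injective _ hc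

section Counting

variable (Δ ℓ k : ℕ)

private noncomputable def cnt : ℝ :=
  Nat.card {σ : TVertex Δ ℓ → Fin k // ProperColoring Δ ℓ k σ}

private noncomputable def cntX (X : (Fin ℓ → Fin Δ) → Fin k) : ℝ :=
  Nat.card {σ : TVertex Δ ℓ → Fin k // ProperColoring Δ ℓ k σ ∧ leafColoring σ = X}

private noncomputable def cntC (c : Fin k) : ℝ :=
  Nat.card {σ : TVertex Δ ℓ → Fin k // ProperColoring Δ ℓ k σ ∧ σ (troot Δ ℓ) = c}

private noncomputable def cntCX (c : Fin k) (X : (Fin ℓ → Fin Δ) → Fin k) : ℝ :=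
  Nat.card {σ : TVertex Δ ℓ → Fin k //
    ProperColoring Δ ℓ k σ ∧ σ (troot Δ ℓ) = c ∧ leafColoring σ = X}

private lemma sum_cntX : ∑ X, cntX Δ ℓ k X = cnt Δ ℓ k := by
  simp only [cntX, cnt, card_subtype_sum_real]
  have h := sum_fiber_mul (fun σ : TVertex Δ ℓ → Fin k => leafColoring σ)
      (ProperColoring Δ ℓ k) (fun _ => (1:ℝ))
  simp only [mul_one] at h
  exact h

private lemma sum_cntCX_overX (c : Fin k) :
    ∑ X, cntCX Δ ℓ k c X = cntC Δ ℓ k c := by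
  simp only [cntCX, cntC, card_subtype_sum_real]
  have h := sum_fiber_mul (fun σ : TVertex Δ ℓ → Fin k => leafColoring σ)
      (fun σ => ProperColoring Δ ℓ k σ ∧ σ (troot Δ ℓ) = c) (fun _ => (1:ℝ))
  simp only [mul_one] at h
  rw [← h]
  exact Finset.sum_congr rfl fun X _ => Finset.sum_congr rfl fun σ _ =>
    ind_congr (by tauto)

private lemma sum_cntCX_overC (X : (Fin ℓ → Fin Δ) → Fin k) :
    ∑ c, cntCX Δ ℓ k c X = cntX Δ ℓ k X := by
  simp only [cntCX, cntX, card_subtype_sum_real]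
  have h := sum_fiber_mul (fun σ : TVertex Δ ℓ → Fin k => σ (troot Δ ℓ))
      (fun σ => ProperColoring Δ ℓ k σ ∧ leafColoring σ = X) (fun _ => (1:ℝ))
  simp only [mul_one] at h
  rw [← h]
  exact Finset.sum_congr rfl fun c _ => Finset.sum_congr rfl fun σ _ =>
    ind_congr (by tauto)

private lemma sum_cntC : ∑ c, cntC Δ ℓ k c = cnt Δ ℓ k := by
  simp only [cntC, cnt, card_subtype_sum_real]
  have h := sum_fiber_mul (fun σ : TVertex Δ ℓ → Fin k => σ (troot Δ ℓ))
      (ProperColoring Δ ℓ k) (fun _ => (1:ℝ))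
  simp only [mul_one] at h
  exact h

private lemma proper_comp {Δ ℓ k : ℕ} (e : Fin k ≃ Fin k) (σ : TVertex Δ ℓ → Fin k)
    (h : ProperColoring Δ ℓ k σ) : ProperColoring Δ ℓ k (e ∘ σ) :=
  fun v hv j hEq => h v hv j (e.injective hEq)

private lemma cntC_const (c c' : Fin k) : cntC Δ ℓ k c = cntC Δ ℓ k c' := by
  unfold cntC
  refine congrArg _ (Nat.card_congr ?_)
  refine ⟨fun s => ⟨Equiv.swap c c' ∘ s.1, proper_comp _ _ s.2.1, ?_⟩,
      fun s => ⟨Equiv.swap c c' ∘ s.1, proper_comp _ _ s.2.1, ?_⟩, ?_, ?_⟩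
  · show Equiv.swap c c' (s.1 _) = c'
    rw [s.2.2, Equiv.swap_apply_left]
  · show Equiv.swap c c' (s.1 _) = c
    rw [s.2.2, Equiv.swap_apply_right]
  · intro s
    refine Subtype.ext (funext fun v => ?_)
    show Equiv.swap c c' (Equiv.swap c c' (s.1 v)) = s.1 v
    exact Equiv.swap_apply_self _ _ _
  · intro s
    refine Subtype.ext (funext fun v => ?_)
    show Equiv.swap c c' (Equiv.swap c c' (s.1 v)) = s.1 v
    exact Equiv.swap_apply_self _ _ _

private lemma cnt_pos (hk : 2 ≤ k) : 0 < cnt Δ ℓ k := by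
  obtain ⟨σ0, h0⟩ := exists_proper Δ ℓ k hk
  unfold cnt
  have : Nonempty {σ : TVertex Δ ℓ → Fin k // ProperColoring Δ ℓ k σ} := ⟨⟨σ0, h0⟩⟩
  exact_mod_cast Nat.card_pos

private lemma cnt_eq_k_mul (c : Fin k) : cnt Δ ℓ k = k * cntC Δ ℓ k c := by
  rw [← sum_cntC]
  rw [Finset.sum_congr rfl fun c' _ => cntC_const Δ ℓ k c' c]
  rw [Finset.sum_const, Finset.card_univ, Fintype.card_fin, nsmul_eq_mul]

private lemma cntX_nonneg (X : (Fin ℓ → Fin Δ) → Fin k) : 0 ≤ cntX Δ ℓ k X :=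
  Nat.cast_nonneg _

private lemma cntCX_nonneg (c : Fin k) (X : (Fin ℓ → Fin Δ) → Fin k) :
    0 ≤ cntCX Δ ℓ k c X := Nat.cast_nonneg _

private lemma cntCX_le (c : Fin k) (X : (Fin ℓ → Fin Δ) → Fin k) :
    cntCX Δ ℓ k c X ≤ cntX Δ ℓ k X := by
  simp only [cntCX, cntX, card_subtype_sum_real]
  refine Finset.sum_le_sum fun σ _ => ?_
  unfold ind
  split_ifs with h1 h2
  · exact le_rfl
  · exact absurd ⟨h1.1, h1.2.2⟩ h2
  · norm_num
  · exact le_rfl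

private lemma treeExp_eq (F : ((Fin ℓ → Fin Δ) → Fin k) → ℝ) :
    treeExp Δ ℓ k (fun σ => F (leafColoring σ))
      = (∑ X, cntX Δ ℓ k X * F X) / cnt Δ ℓ k := by
  unfold treeExp cnt
  congr 1
  simp only [cntX, card_subtype_sum_real]
  rw [sum_fiber_mul (fun σ : TVertex Δ ℓ → Fin k => leafColoring σ)
    (ProperColoring Δ ℓ k) F]
  refine (Finset.sum_congr rfl fun σ _ => ?_).symm
  by_cases h : ProperColoring Δ ℓ k σ <;> simp [Set.indicator_apply, ind, h]

private lemma upDist_eq (X : (Fin ℓ → Fin Δ) → Fin k) (c : Fin k) :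
    upDist Δ ℓ k X c = cntCX Δ ℓ k c X / cntX Δ ℓ k X := by
  unfold upDist condProbRootP cntCX cntX
  have h1 : Nat.card {σ : TVertex Δ ℓ → Fin k //
        ProperColoring Δ ℓ k σ ∧ AgreesOn σ (toPartial X) ∧ σ (troot Δ ℓ) = c}
      = Nat.card {σ : TVertex Δ ℓ → Fin k //
        ProperColoring Δ ℓ k σ ∧ σ (troot Δ ℓ) = c ∧ leafColoring σ = X} :=
    Nat.card_congr (Equiv.subtypeEquivRight fun σ => by
      rw [agreesOn_toPartial]; tauto)
  have h2 : Nat.card {σ : TVertex Δ ℓ → Fin k //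
        ProperColoring Δ ℓ k σ ∧ AgreesOn σ (toPartial X)}
      = Nat.card {σ : TVertex Δ ℓ → Fin k //
        ProperColoring Δ ℓ k σ ∧ leafColoring σ = X} :=
    Nat.card_congr (Equiv.subtypeEquivRight fun σ => by
      rw [agreesOn_toPartial])
  rw [h1, h2]

private lemma downDist_eq (c : Fin k) (X : (Fin ℓ → Fin Δ) → Fin k) :
    downDist Δ ℓ k c X = cntCX Δ ℓ k c X / cntC Δ ℓ k c := rfl

end Counting

/-- Proposition 21 of the paper: equivalence, up to polynomial factors,
of the two forms of decay of correlation: with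
`α_{c,ℓ} = E_{X∼μ_ℓ}[|μ↑_{X,ℓ}(c) − 1/k|]` and `β_{c,ℓ} = |μ↓↑_{c,ℓ}(c) − 1/k|`,
one has `β_{c,ℓ}/(k−1) ≤ α_{c,ℓ} ≤ √β_{c,ℓ}`. -/
theorem alpha_beta_equivalence (Δ k : ℕ) (hΔ : 2 ≤ Δ) (hk : 2 ≤ k) (ℓ : ℕ) (c : Fin k) :
    |downUp Δ ℓ k c c - 1 / (k : ℝ)| / ((k : ℝ) - 1) ≤
        treeExp Δ ℓ k (fun σ => |upDist Δ ℓ k (leafColoring σ) c - 1 / (k : ℝ)|) ∧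
      treeExp Δ ℓ k (fun σ => |upDist Δ ℓ k (leafColoring σ) c - 1 / (k : ℝ)|) ≤
        Real.sqrt |downUp Δ ℓ k c c - 1 / (k : ℝ)| := by
  have hcnt := cnt_pos Δ ℓ k hk
  have hk0 : (0:ℝ) < k := by exact_mod_cast (by omega : 0 < k)
  have hkR : (k:ℝ) ≠ 0 := ne_of_gt hk0
  have hmul := cnt_eq_k_mul Δ ℓ k c
  have hC : cntC Δ ℓ k c = cnt Δ ℓ k / k := by rw [hmul]; field_simp
  have hcntC : 0 < cntC Δ ℓ k c := by rw [hC]; positivity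
  set w : ((Fin ℓ → Fin Δ) → Fin k) → ℝ := fun X => cntX Δ ℓ k X / cnt Δ ℓ k with hw_def
  set p : ((Fin ℓ → Fin Δ) → Fin k) → ℝ := fun X => cntCX Δ ℓ k c X / cntX Δ ℓ k X
    with hp_def
  have hw : ∀ X, 0 ≤ w X := fun X => div_nonneg (cntX_nonneg Δ ℓ k X) hcnt.le
  have hw1 : ∑ X, w X = 1 := by
    rw [hw_def, ← Finset.sum_div, sum_cntX, div_self hcnt.ne']
  have hzero : ∀ X, cntX Δ ℓ k X = 0 → cntCX Δ ℓ k c X = 0 := fun X h =>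
    le_antisymm (h ▸ cntCX_le Δ ℓ k c X) (cntCX_nonneg Δ ℓ k c X)
  have hp0 : ∀ X, 0 ≤ p X := fun X =>
    div_nonneg (cntCX_nonneg Δ ℓ k c X) (cntX_nonneg Δ ℓ k X)
  have hp1 : ∀ X, p X ≤ 1 := by
    intro X
    by_cases h : cntX Δ ℓ k X = 0
    · show cntCX Δ ℓ k c X / cntX Δ ℓ k X ≤ 1
      rw [h, div_zero]; norm_num
    · exact div_le_one ((cntX_nonneg Δ ℓ k X).lt_of_ne' h) |>.mpr (cntCX_le Δ ℓ k c X)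
  have hwpX : ∀ X, w X * p X = cntCX Δ ℓ k c X / cnt Δ ℓ k := by
    intro X
    show cntX Δ ℓ k X / cnt Δ ℓ k * (cntCX Δ ℓ k c X / cntX Δ ℓ k X) = _
    by_cases h : cntX Δ ℓ k X = 0
    · rw [h, hzero X h]; simp
    · field_simp
  have hwp : ∑ X, w X * p X = 1 / (k:ℝ) := by
    simp only [hwpX]
    rw [← Finset.sum_div, sum_cntCX_overX, hC]
    field_simp
  have hdu : downUp Δ ℓ k c c = (k:ℝ) * ∑ X, w X * p X ^ 2 := by
    unfold downUp
    rw [Finset.mul_sum]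
    refine Finset.sum_congr rfl fun X _ => ?_
    rw [downDist_eq, upDist_eq]
    show cntCX Δ ℓ k c X / cntC Δ ℓ k c * (cntCX Δ ℓ k c X / cntX Δ ℓ k X)
      = (k:ℝ) * (cntX Δ ℓ k X / cnt Δ ℓ k * (cntCX Δ ℓ k c X / cntX Δ ℓ k X) ^ 2)
    by_cases h : cntX Δ ℓ k X = 0
    · rw [hzero X h]; simp
    · rw [hC]
      field_simp
  have htE : treeExp Δ ℓ k (fun σ => |upDist Δ ℓ k (leafColoring σ) c - 1 / (k:ℝ)|)
      = ∑ X, w X * |p X - 1/(k:ℝ)| := by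
    have h := treeExp_eq Δ ℓ k (fun X => |upDist Δ ℓ k X c - 1/(k:ℝ)|)
    rw [h, Finset.sum_div]
    refine Finset.sum_congr rfl fun X _ => ?_
    rw [upDist_eq]
    show cntX Δ ℓ k X * |cntCX Δ ℓ k c X / cntX Δ ℓ k X - 1/(k:ℝ)| / cnt Δ ℓ k
      = cntX Δ ℓ k X / cnt Δ ℓ k * |cntCX Δ ℓ k c X / cntX Δ ℓ k X - 1/(k:ℝ)|
    ring
  obtain ⟨hl, hr⟩ := core k hk w p hw hw1 hp0 hp1 hwp
  rw [htE, hdu]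
  exact ⟨hl, hr⟩
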